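/- arXiv:2210.03626 — 3 statements merged into one kernel-verified Lean document; each statement's English description precedes it below -/
import Mathlib

section
/- Let M be a faithful reduced multiplication R-module. Then the space Min(M) of minimal prime submodules, with closed sets generated by the sets V(aM) for a ∈ R, is a Hausdorff topological space with a base of open-and-closed sets. -/
variable {R : Type*} [CommRing R] {M : Type*} [AddCommGroup M] [Module R M]

/-- `M` is a multiplication module: every submodule is `IM` for some ideal `I`. -/
def IsMultiplicationModule (R M : Type*) [CommRing R] [AddCommGroup M] [Module R M] : Prop :=
  ∀ N : Submodule R M, ∃ I : Ideal R, N = I • (⊤ : Submodule R M)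

/-- A prime submodule. -/
def Submodule.IsPrimeSubmodule (P : Submodule R M) : Prop :=
  P ≠ ⊤ ∧ ∀ (r : R) (m : M), r • m ∈ P → m ∈ P ∨ r ∈ P.colon ⊤

/-- `M` is reduced: the intersection of all prime submodules is zero. -/
def IsReducedModule (R M : Type*) [CommRing R] [AddCommGroup M] [Module R M] : Prop :=
  sInf {P : Submodule R M | P.IsPrimeSubmodule} = ⊥

/-- A minimal prime submodule of `M`. -/
def Submodule.IsMinimalPrime (P : Submodule R M) : Prop :=
  P.IsPrimeSubmodule ∧ ∀ Q : Submodule R M, Q.IsPrimeSubmodule → Q ≤ P → Q = P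

/-- `𝔓_K`: the intersection of all minimal prime submodules containing `K`
(equal to `M` if there are none). -/
def primeRad (K : Submodule R M) : Submodule R M :=
  sInf {P : Submodule R M | P.IsMinimalPrime ∧ K ≤ P}

/-- `V(K)`: the set of minimal prime submodules containing `K`. -/
def Vset (K : Submodule R M) : Set (Submodule R M) :=
  {P : Submodule R M | P.IsMinimalPrime ∧ K ≤ P}

/-- A quasi `z°`-submodule. -/
def IsQuasiZSubmodule (N : Submodule R M) : Prop :=
  N ≠ ⊤ ∧ ∀ a ∈ N.colon ⊤, primeRad (Ideal.span {a} • (⊤ : Submodule R M)) ≤ N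

/-- `𝔓_I` for an ideal: intersection of all minimal prime ideals of `R` containing `I`. -/
def idealPrimeRad (I : Ideal R) : Ideal R :=
  sInf {p : Ideal R | p ∈ minimalPrimes R ∧ I ≤ p}

/-- A `z°`-ideal of `R`. -/
def IsZIdeal (I : Ideal R) : Prop :=
  I ≠ ⊤ ∧ ∀ a ∈ I, idealPrimeRad (Ideal.span {a}) ≤ I

/-- `(0 :_M J)` for an ideal `J`. -/
def pointAnn (J : Ideal R) : Submodule R M where
  carrier := {m : M | ∀ j ∈ J, j • m = 0}
  zero_mem' := by intro j _; simp
  add_mem' := by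
    intro a b ha hb j hj
    rw [smul_add, ha j hj, hb j hj, add_zero]
  smul_mem' := by
    intro c m hm j hj
    rw [smul_comm, hm j hj, smul_zero]


def MinSpec (R M : Type*) [CommRing R] [AddCommGroup M] [Module R M] : Type _ :=
  {P : Submodule R M // P.IsMinimalPrime}

/-- The topology on `Min(M)` whose closed sets are generated by the sets `V(aM)`. -/
def minTop (R M : Type*) [CommRing R] [AddCommGroup M] [Module R M] :
    TopologicalSpace (MinSpec R M) :=
  TopologicalSpace.generateFrom
    {U : Set (MinSpec R M) | ∃ a : R,
      U = {P : MinSpec R M | ¬ Ideal.span {a} • (⊤ : Submodule R M) ≤ P.1}}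

/-! ### Auxiliary lemmas -/

lemma span_smul_top_le_iff {a : R} {P : Submodule R M} :
    Ideal.span {a} • (⊤ : Submodule R M) ≤ P ↔ a ∈ P.colon ⊤ := by
  constructor
  · intro h
    rw [Submodule.mem_colon]
    intro x _
    exact h (Submodule.smul_mem_smul (Ideal.subset_span rfl) trivial)
  · intro h
    refine Submodule.smul_le.2 fun c hc x _ => ?_
    obtain ⟨t, rfl⟩ := Ideal.mem_span_singleton'.1 hc
    rw [mul_smul]
    exact P.smul_mem t (Submodule.mem_colon.1 h x trivial)

lemma colon_isPrime {P : Submodule R M} (hP : P.IsPrimeSubmodule) :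
    (P.colon ⊤).IsPrime := by
  constructor
  · intro h
    apply hP.1
    rw [eq_top_iff]
    intro m _
    simpa using Submodule.mem_colon.1 (h.ge (Submodule.mem_top : (1:R) ∈ (⊤ : Ideal R))) m (Submodule.mem_top : m ∈ (⊤ : Submodule R M))
  · intro a b hab
    by_cases ha : a ∈ P.colon ⊤
    · exact Or.inl ha
    · right
      rw [Submodule.mem_colon]
      intro m _
      rcases hP.2 a (b • m)
        (by rw [← mul_smul]; exact Submodule.mem_colon.1 hab m trivial) with h | h
      · exact h
      · exact absurd h ha

lemma eq_zero_of_pow_eq_zero_red (hfaithful : (⊥ : Submodule R M).colon ⊤ = ⊥)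
    (hred : IsReducedModule R M) {a : R} {n : ℕ} (h : a ^ n = 0) : a = 0 := by
  cases n with
  | zero =>
    rw [pow_zero] at h
    calc a = a * 1 := (mul_one a).symm
    _ = 0 := by rw [h, mul_zero]
  | succ n =>
    have key : ∀ m : M, a • m = 0 := by
      intro m
      have hm : a • m ∈ sInf {P : Submodule R M | P.IsPrimeSubmodule} := by
        rw [Submodule.mem_sInf]
        intro P hP
        have hpow : a ^ (n + 1) ∈ P.colon ⊤ := by
          rw [Submodule.mem_colon]
          intro x _
          rw [h, zero_smul]
          exact P.zero_mem
        have := (colon_isPrime hP).mem_of_pow_mem (n + 1) hpow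
        exact Submodule.mem_colon.1 this m trivial
      rw [hred] at hm
      simpa using hm
    have : a ∈ (⊥ : Submodule R M).colon ⊤ := by
      rw [Submodule.mem_colon]
      intro m _
      simpa using key m
    rw [hfaithful] at this
    simpa using this

lemma exists_cyclic (hmul : IsMultiplicationModule R M) {p : Ideal R}
    (hp : p • (⊤ : Submodule R M) ≠ ⊤) :
    ∃ s : R, s ∉ p ∧ ∃ m0 : M, ∀ x : M, ∃ c : R, s • x = c • m0 := by
  have hex : ∃ m0 : M, m0 ∉ p • (⊤ : Submodule R M) := by
    by_contra h
    push_neg at h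
    exact hp (Submodule.eq_top_iff'.2 h)
  obtain ⟨m0, hm0⟩ := hex
  obtain ⟨I, hI⟩ := hmul (Submodule.span R {m0})
  have hInotle : ¬ I ≤ p := by
    intro hle
    apply hm0
    have h1 : m0 ∈ I • (⊤ : Submodule R M) := by
      rw [← hI]; exact Submodule.mem_span_singleton_self m0
    exact Submodule.smul_mono_left hle h1
  obtain ⟨s, hsI, hsp⟩ := SetLike.not_le_iff_exists.1 hInotle
  refine ⟨s, hsp, m0, fun x => ?_⟩
  have hsx : s • x ∈ Submodule.span R {m0} := by
    rw [hI]; exact Submodule.smul_mem_smul hsI trivial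
  obtain ⟨c, hc⟩ := Submodule.mem_span_singleton.1 hsx
  exact ⟨c, hc.symm⟩

lemma eq_top_of_maximal (hmul : IsMultiplicationModule R M) {N : Submodule R M}
    (h : ∀ p : Ideal R, p.IsMaximal → N.colon ⊤ ≤ p → p • (⊤ : Submodule R M) = ⊤) :
    N = ⊤ := by
  rw [Submodule.eq_top_iff']
  intro m
  have hAtop : N.colon (Submodule.span R {m}) = ⊤ := by
    by_contra hA'
    obtain ⟨p, hpmax, hple⟩ := Ideal.exists_le_maximal _ hA'
    have hcol : N.colon ⊤ ≤ p := by
      refine le_trans (fun r hr => ?_) hple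
      exact Submodule.mem_colon.2 fun x _ => Submodule.mem_colon.1 hr x trivial
    have htop := h p hpmax hcol
    obtain ⟨I, hI⟩ := hmul (Submodule.span R {m})
    have hspan : Submodule.span R {m} = p • Submodule.span R {m} := by
      conv_lhs => rw [hI]
      rw [← htop, ← mul_smul, mul_comm, mul_smul, ← hI]
    have hmem : m ∈ p • Submodule.span R {m} := by
      rw [← hspan]; exact Submodule.mem_span_singleton_self m
    have hle2 : p • Submodule.span R {m} ≤
        Submodule.map (LinearMap.toSpanSingleton R M m) p := by
      refine Submodule.smul_le.2 fun t ht x hx => ?_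
      obtain ⟨c, hc⟩ := Submodule.mem_span_singleton.1 hx
      refine Submodule.mem_map.2 ⟨t * c, p.mul_mem_right c ht, ?_⟩
      rw [LinearMap.toSpanSingleton_apply, mul_smul, ← hc, smul_comm]
    obtain ⟨t, htp, htm⟩ := Submodule.mem_map.1 (hle2 hmem)
    rw [LinearMap.toSpanSingleton_apply] at htm
    have h1t : (1 - t) ∈ N.colon (Submodule.span R {m}) := by
      rw [Submodule.mem_colon]
      intro x hx
      obtain ⟨c, hc⟩ := Submodule.mem_span_singleton.1 hx
      have hzero : (1 - t) • x = 0 := by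
        rw [← hc, smul_comm, sub_smul, one_smul, htm, sub_self, smul_zero]
      rw [hzero]
      exact N.zero_mem
    have hone : (1 : R) ∈ p := by
      have := p.add_mem (hple h1t) htp
      simpa using this
    exact hpmax.ne_top ((Ideal.eq_top_iff_one p).2 hone)
  have h1 : (1 : R) ∈ N.colon (Submodule.span R {m}) := by
    rw [hAtop]; exact Submodule.mem_top
  have := Submodule.mem_colon.1 h1 m (Submodule.mem_span_singleton_self m)
  simpa using this

lemma colon_smul_top_eq (hfaithful : (⊥ : Submodule R M).colon ⊤ = ⊥)
    (hmul : IsMultiplicationModule R M) {q : Ideal R} (hq : q.IsPrime)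
    (hne : q • (⊤ : Submodule R M) ≠ ⊤) :
    (q • (⊤ : Submodule R M)).colon ⊤ = q := by
  refine le_antisymm ?_ ?_
  swap
  · intro t ht
    exact Submodule.mem_colon.2 fun x _ => Submodule.smul_mem_smul ht trivial
  intro a ha
  have hexp : ∃ p : Ideal R, p.IsMaximal ∧ (q • (⊤ : Submodule R M)).colon ⊤ ≤ p ∧
      p • (⊤ : Submodule R M) ≠ ⊤ := by
    by_contra hcon
    push_neg at hcon
    exact hne (eq_top_of_maximal hmul fun p hp hle => hcon p hp hle)
  obtain ⟨p, hpmax, hple, hptop⟩ := hexp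
  obtain ⟨s, hsp, m0, hs⟩ := exists_cyclic hmul hptop
  have key : ∀ n ∈ q • (⊤ : Submodule R M), ∃ t ∈ q, s • n = t • m0 := by
    intro n hn
    have hle2 : q • (⊤ : Submodule R M) ≤
        Submodule.comap (LinearMap.lsmul R M s)
          (Submodule.map (LinearMap.toSpanSingleton R M m0) q) := by
      refine Submodule.smul_le.2 fun b hb x _ => ?_
      obtain ⟨c, hc⟩ := hs x
      refine Submodule.mem_comap.2 (Submodule.mem_map.2 ⟨b * c, q.mul_mem_right c hb, ?_⟩)
      rw [LinearMap.toSpanSingleton_apply, LinearMap.lsmul_apply, mul_smul,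
        smul_comm s b x, hc]
    have := Submodule.mem_comap.1 (hle2 hn)
    obtain ⟨t, htq, htm⟩ := Submodule.mem_map.1 this
    rw [LinearMap.toSpanSingleton_apply] at htm
    rw [LinearMap.lsmul_apply] at htm
    exact ⟨t, htq, htm.symm⟩
  have ham0 : a • m0 ∈ q • (⊤ : Submodule R M) := Submodule.mem_colon.1 ha m0 trivial
  obtain ⟨t, htq, ht⟩ := key _ ham0
  have hann : s * (s * a - t) ∈ (⊥ : Submodule R M).colon ⊤ := by
    rw [Submodule.mem_colon]
    intro x _
    obtain ⟨c, hc⟩ := hs x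
    rw [Submodule.mem_bot]
    calc (s * (s * a - t)) • x = (s * a - t) • (s • x) := by rw [mul_comm, mul_smul]
    _ = (s * a - t) • (c • m0) := by rw [hc]
    _ = c • ((s * a - t) • m0) := smul_comm _ _ _
    _ = c • ((s * a) • m0 - t • m0) := by rw [sub_smul]
    _ = c • (s • (a • m0) - t • m0) := by rw [mul_smul]
    _ = 0 := by rw [ht, sub_self, smul_zero]
  rw [hfaithful] at hann
  have hzero : s * (s * a - t) = 0 := by simpa using hann
  rw [mul_sub] at hzero
  have heq : s * (s * a) = s * t := sub_eq_zero.1 hzero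
  have hsq : s ∉ q := fun hsq' =>
    hsp (hple (Submodule.mem_colon.2 fun x _ => Submodule.smul_mem_smul hsq' trivial))
  have h1 : s * (s * a) ∈ q := heq ▸ q.mul_mem_left s htq
  exact (hq.mem_or_mem ((hq.mem_or_mem h1).resolve_left hsq)).resolve_left hsq

lemma smul_top_isPrimeSubmodule (hfaithful : (⊥ : Submodule R M).colon ⊤ = ⊥)
    (hmul : IsMultiplicationModule R M) {q : Ideal R} (hq : q.IsPrime)
    (hne : q • (⊤ : Submodule R M) ≠ ⊤) :
    (q • (⊤ : Submodule R M)).IsPrimeSubmodule := by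
  have hcol := colon_smul_top_eq hfaithful hmul hq hne
  refine ⟨hne, fun r m hrm => ?_⟩
  by_cases hrq : r ∈ q
  · right; rw [hcol]; exact hrq
  · left
    obtain ⟨I, hI⟩ := hmul (Submodule.span R {m})
    have hIq : I ≤ q := by
      intro i hi
      have hmemcol : r * i ∈ (q • (⊤ : Submodule R M)).colon ⊤ := by
        rw [Submodule.mem_colon]
        intro x _
        have hix : i • x ∈ Submodule.span R {m} := by
          rw [hI]; exact Submodule.smul_mem_smul hi trivial
        obtain ⟨c, hc⟩ := Submodule.mem_span_singleton.1 hix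
        have hre : (r * i) • x = c • (r • m) := by rw [mul_smul, ← hc, smul_comm]
        rw [hre]
        exact Submodule.smul_mem _ c hrm
      rw [hcol] at hmemcol
      exact (hq.mem_or_mem hmemcol).resolve_left hrq
    have hle : Submodule.span R {m} ≤ q • (⊤ : Submodule R M) := by
      rw [hI]; exact Submodule.smul_mono_left hIq
    exact hle (Submodule.mem_span_singleton_self m)

lemma exists_ann (hfaithful : (⊥ : Submodule R M).colon ⊤ = ⊥)
    (hmul : IsMultiplicationModule R M) (hred : IsReducedModule R M)
    {P : Submodule R M} (hP : P.IsMinimalPrime) {a : R} (ha : a ∈ P.colon ⊤) :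
    ∃ m : M, a • m = 0 ∧ m ∉ P := by
  by_contra hcon
  push_neg at hcon
  have hprime := colon_isPrime hP.1
  have h1p : (1 : R) ∉ P.colon ⊤ := fun h =>
    hprime.ne_top ((Ideal.eq_top_iff_one _).2 h)
  let S : Submonoid R :=
    { carrier := {x | ∃ n : ℕ, ∃ s : R, s ∉ P.colon ⊤ ∧ x = a ^ n * s}
      one_mem' := ⟨0, 1, h1p, by ring⟩
      mul_mem' := by
        rintro x y ⟨n, s, hsnot, rfl⟩ ⟨n', t, htnot, rfl⟩
        exact ⟨n + n', s * t, fun h => ((hprime.mem_or_mem h).elim hsnot htnot), by ring⟩ }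
  have h0 : (0 : R) ∉ S := by
    rintro ⟨n, s, hsnot, hns⟩
    cases n with
    | zero =>
      rw [pow_zero, one_mul] at hns
      exact hsnot (hns ▸ (P.colon ⊤).zero_mem)
    | succ n =>
      have hpow : (a * s) ^ (n + 1) = 0 := by
        have hrw : (a * s) ^ (n + 1) = (a ^ (n + 1) * s) * s ^ n := by ring
        rw [hrw, ← hns, zero_mul]
      have has : a * s = 0 := eq_zero_of_pow_eq_zero_red hfaithful hred hpow
      apply hsnot
      rw [Submodule.mem_colon]
      intro m _
      exact hcon (s • m) (by rw [smul_smul, has, zero_smul])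
  have hdisj : Disjoint ((⊥ : Ideal R) : Set R) (S : Set R) := by
    rw [Set.disjoint_left]
    intro x hx hxS
    rw [SetLike.mem_coe, Ideal.mem_bot] at hx
    subst hx
    exact h0 hxS
  obtain ⟨q, hqprime, -, hqdisj⟩ := Ideal.exists_le_prime_disjoint (I := ⊥) S hdisj
  have hqp : q ≤ P.colon ⊤ := by
    intro x hxq
    by_contra hxp
    exact Set.disjoint_left.1 hqdisj hxq ⟨0, x, hxp, by rw [pow_zero, one_mul]⟩
  have haq : a ∉ q := fun haq' =>
    Set.disjoint_left.1 hqdisj haq' ⟨1, 1, h1p, by ring⟩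
  have hqP : q • (⊤ : Submodule R M) ≤ P :=
    Submodule.smul_le.2 fun r hr x _ => Submodule.mem_colon.1 (hqp hr) x trivial
  have hqne : q • (⊤ : Submodule R M) ≠ ⊤ := fun h => hP.1.1 (top_le_iff.1 (h ▸ hqP))
  have hqPrime := smul_top_isPrimeSubmodule hfaithful hmul hqprime hqne
  have heq := hP.2 _ hqPrime hqP
  apply haq
  rw [← colon_smul_top_eq hfaithful hmul hqprime hqne, heq]
  exact ha

/-! ### The basic open sets -/

/-- The basic open set `D(a) = Min(M) \ V(aM)`. -/
def Dset (R M : Type*) [CommRing R] [AddCommGroup M] [Module R M] (a : R) :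
    Set (MinSpec R M) :=
  {P : MinSpec R M | ¬ Ideal.span {a} • (⊤ : Submodule R M) ≤ P.1}

lemma isOpen_Dset (a : R) : @IsOpen (MinSpec R M) (minTop R M) (Dset R M a) :=
  TopologicalSpace.GenerateOpen.basic _ ⟨a, rfl⟩

lemma isClosed_Dset (hfaithful : (⊥ : Submodule R M).colon ⊤ = ⊥)
    (hmul : IsMultiplicationModule R M) (hred : IsReducedModule R M) (a : R) :
    @IsClosed (MinSpec R M) (minTop R M) (Dset R M a) := by
  letI := minTop R M
  rw [← isOpen_compl_iff]
  obtain ⟨J, hJ⟩ := hmul (LinearMap.ker (LinearMap.lsmul R M a))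
  have hcompl : (Dset R M a)ᶜ = ⋃ b ∈ (J : Set R), Dset R M b := by
    ext P
    constructor
    · intro hP
      have hle : Ideal.span {a} • (⊤ : Submodule R M) ≤ P.1 := not_not.1 hP
      have ha : a ∈ P.1.colon ⊤ := span_smul_top_le_iff.1 hle
      obtain ⟨m, hm0, hmP⟩ := exists_ann hfaithful hmul hred P.2 ha
      have hmJ : m ∈ J • (⊤ : Submodule R M) := by
        rw [← hJ]
        exact LinearMap.mem_ker.2 (by simpa using hm0)
      have hex : ∃ b ∈ J, P ∈ Dset R M b := by
        by_contra hnone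
        push_neg at hnone
        apply hmP
        have hJle : J • (⊤ : Submodule R M) ≤ P.1 :=
          Submodule.smul_le.2 fun b hb x _ =>
            (not_not.1 (hnone b hb))
              (Submodule.smul_mem_smul (Ideal.subset_span rfl) trivial)
        exact hJle hmJ
      obtain ⟨b, hb, hPb⟩ := hex
      exact Set.mem_biUnion hb hPb
    · intro hP
      obtain ⟨b, hb, hPb⟩ := Set.mem_iUnion₂.1 hP
      have hbcol : b ∉ P.1.colon ⊤ := fun h => hPb (span_smul_top_le_iff.2 h)
      have hex : ∃ x : M, b • x ∉ P.1 := by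
        by_contra hnone
        push_neg at hnone
        exact hbcol (Submodule.mem_colon.2 fun x _ => hnone x)
      obtain ⟨x, hx⟩ := hex
      have hbx : b • x ∈ J • (⊤ : Submodule R M) := Submodule.smul_mem_smul hb trivial
      rw [← hJ] at hbx
      have habx : a • (b • x) = 0 := by
        rw [smul_comm]
        simpa using LinearMap.mem_ker.1 hbx
      have : a ∈ P.1.colon ⊤ := by
        rcases P.2.1.2 a (b • x) (by rw [habx]; exact P.1.zero_mem) with h | h
        · exact absurd h hx
        · exact h
      exact not_not.2 (span_smul_top_le_iff.2 this)
  rw [hcompl]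
  exact isOpen_biUnion fun b _ => isOpen_Dset b

lemma t2_minTop (hfaithful : (⊥ : Submodule R M).colon ⊤ = ⊥)
    (hmul : IsMultiplicationModule R M) (hred : IsReducedModule R M) :
    @T2Space (MinSpec R M) (minTop R M) := by
  letI := minTop R M
  refine ⟨fun P Q hPQ => ?_⟩
  have hne : ¬ P.1 ≤ Q.1 := fun hle => hPQ (Subtype.ext (Q.2.2 P.1 P.2.1 hle))
  obtain ⟨I, hI⟩ := hmul P.1
  have hex : ∃ a ∈ I, ¬ Ideal.span {a} • (⊤ : Submodule R M) ≤ Q.1 := by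
    by_contra h
    push_neg at h
    apply hne
    rw [hI]
    exact Submodule.smul_le.2 fun b hb x _ =>
      (h b hb) (Submodule.smul_mem_smul (Ideal.subset_span rfl) trivial)
  obtain ⟨a, haI, haQ⟩ := hex
  have hPmem : P ∈ (Dset R M a)ᶜ := by
    intro hmem
    apply hmem
    calc Ideal.span {a} • (⊤ : Submodule R M)
        ≤ I • (⊤ : Submodule R M) :=
          Submodule.smul_mono_left (Ideal.span_le.2 (Set.singleton_subset_iff.2 haI))
    _ = P.1 := hI.symm
  exact ⟨(Dset R M a)ᶜ, Dset R M a,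
    isOpen_compl_iff.2 (isClosed_Dset hfaithful hmul hred a), isOpen_Dset a,
    hPmem, haQ, disjoint_compl_left⟩

lemma basis_minTop (hfaithful : (⊥ : Submodule R M).colon ⊤ = ⊥)
    (hmul : IsMultiplicationModule R M) (hred : IsReducedModule R M) :
    @TopologicalSpace.IsTopologicalBasis (MinSpec R M) (minTop R M)
      {U : Set (MinSpec R M) | ∃ a : R, U = Dset R M a} := by
  letI := minTop R M
  refine ⟨?_, ?_, rfl⟩
  · rintro t1 ⟨a, rfl⟩ t2 ⟨b, rfl⟩ P hP
    refine ⟨Dset R M (a * b), ⟨a * b, rfl⟩, ?_, ?_⟩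
    · have hprime := colon_isPrime P.2.1
      intro hle
      have hab : a * b ∈ P.1.colon ⊤ := span_smul_top_le_iff.1 hle
      rcases hprime.mem_or_mem hab with h | h
      · exact hP.1 (span_smul_top_le_iff.2 h)
      · exact hP.2 (span_smul_top_le_iff.2 h)
    · intro Q hQ
      constructor
      · intro hle
        exact hQ (span_smul_top_le_iff.2
          ((Q.1.colon ⊤).mul_mem_right b (span_smul_top_le_iff.1 hle)))
      · intro hle
        exact hQ (span_smul_top_le_iff.2
          ((Q.1.colon ⊤).mul_mem_left a (span_smul_top_le_iff.1 hle)))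
  · rw [Set.eq_univ_iff_forall]
    intro P
    refine Set.mem_sUnion.2 ⟨Dset R M 1, ⟨1, rfl⟩, ?_⟩
    intro hle
    exact (colon_isPrime P.2.1).ne_top
      ((Ideal.eq_top_iff_one _).2 (span_smul_top_le_iff.1 hle))

theorem stmt2 (hfaithful : (⊥ : Submodule R M).colon ⊤ = ⊥)
    (hmul : IsMultiplicationModule R M) (hred : IsReducedModule R M) :
    @T2Space (MinSpec R M) (minTop R M) ∧
      ∃ B : Set (Set (MinSpec R M)),
        @TopologicalSpace.IsTopologicalBasis (MinSpec R M) (minTop R M) B ∧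
          ∀ s ∈ B, @IsOpen (MinSpec R M) (minTop R M) s ∧
            @IsClosed (MinSpec R M) (minTop R M) s := by
  refine ⟨t2_minTop hfaithful hmul hred,
    {U : Set (MinSpec R M) | ∃ a : R, U = Dset R M a},
    basis_minTop hfaithful hmul hred, ?_⟩
  rintro s ⟨a, rfl⟩
  exact ⟨isOpen_Dset a, isClosed_Dset hfaithful hmul hred a⟩
end

section
/- Let M be a faithful finitely generated multiplication R-module and I a z°-ideal of R. Then IM is a quasi z°-submodule of M. -/
variable {R : Type*} [CommRing R] {M : Type*} [AddCommGroup M] [Module R M]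

section Aux

/-- Nakayama for faithful finitely generated modules: `JM = M → J = R`. -/
lemma aux_nakayama (hfaithful : (⊥ : Submodule R M).colon ⊤ = ⊥) (hfin : Module.Finite R M)
    {J : Ideal R} (hJ : J • (⊤ : Submodule R M) = ⊤) : J = ⊤ := by
  obtain ⟨r, hr1, hr0⟩ := Submodule.exists_sub_one_mem_and_smul_eq_zero_of_fg_of_le_smul J
    (⊤ : Submodule R M) hfin.fg_top (le_of_eq hJ.symm)
  have hr : r ∈ (⊥ : Submodule R M).colon ⊤ :=
    Submodule.mem_colon.2 fun p _ => hr0 p Submodule.mem_top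
  rw [hfaithful] at hr
  have hr' : r = 0 := hr
  rw [hr', zero_sub] at hr1
  exact Ideal.eq_top_iff_one J |>.2 (by simpa using J.neg_mem hr1)

/-- If `x ∉ mM` with `m` maximal, then `Rx + mM = M`. -/
lemma aux_sup (hmul : IsMultiplicationModule R M) {m : Ideal R} (hm : m.IsMaximal) {x : M}
    (hx : x ∉ m • (⊤ : Submodule R M)) :
    Submodule.span R {x} ⊔ m • (⊤ : Submodule R M) = ⊤ := by
  obtain ⟨J, hJ⟩ := hmul (Submodule.span R {x})
  by_cases hJm : J ≤ m
  · exact absurd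
      (Submodule.smul_mono_left hJm (hJ ▸ Submodule.mem_span_singleton_self x)) hx
  · have hlt : m < m ⊔ J := left_lt_sup.2 hJm
    have htop : m ⊔ J = ⊤ := hm.1.2 _ hlt
    calc Submodule.span R {x} ⊔ m • (⊤ : Submodule R M)
        = J • ⊤ ⊔ m • ⊤ := by rw [hJ]
      _ = (J ⊔ m) • ⊤ := (Submodule.sup_smul J m ⊤).symm
      _ = (⊤ : Ideal R) • ⊤ := by rw [sup_comm J m, htop]
      _ = ⊤ := Submodule.top_smul ⊤

/-- `m`-cyclicity: if `mM ≠ M` for a maximal ideal `m`, there are `q ∉ m` and `x ∈ M`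
with `qM ⊆ Rx`. -/
lemma aux_cyclic (hfin : Module.Finite R M) (hmul : IsMultiplicationModule R M)
    {m : Ideal R} (hm : m.IsMaximal)
    (hmM : m • (⊤ : Submodule R M) ≠ ⊤) :
    ∃ (q : R) (x : M), q ∉ m ∧ ∀ y : M, q • y ∈ Submodule.span R {x} := by
  obtain ⟨x, hx⟩ : ∃ x : M, x ∉ m • (⊤ : Submodule R M) := by
    by_contra h
    push_neg at h
    exact hmM (Submodule.eq_top_iff'.2 h)
  have hsup := aux_sup hmul hm hx
  set Q := Submodule.span R {x} with hQdef
  have hq : (⊤ : Submodule R (M ⧸ Q)) ≤ m • ⊤ := by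
    have hmap := congrArg (Submodule.map Q.mkQ) hsup
    rw [Submodule.map_sup, Submodule.map_smul'', Submodule.map_top, Submodule.range_mkQ] at hmap
    have h0 : Q.map Q.mkQ = ⊥ := by
      apply le_bot_iff.1
      rintro z ⟨y, hy, rfl⟩
      simpa [Submodule.mem_bot, Submodule.Quotient.mk_eq_zero] using hy
    rw [h0, bot_sup_eq] at hmap
    exact le_of_eq hmap.symm
  obtain ⟨r, hr1, hr0⟩ := Submodule.exists_sub_one_mem_and_smul_eq_zero_of_fg_of_le_smul m
    (⊤ : Submodule R (M ⧸ Q)) Module.Finite.fg_top hq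
  refine ⟨r, x, ?_, ?_⟩
  · intro hrm
    have : (1 : R) ∈ m := by
      have := m.sub_mem hrm hr1
      simpa using this
    exact hm.ne_top (Ideal.eq_top_iff_one m |>.2 this)
  · intro y
    have h := hr0 (Q.mkQ y) Submodule.mem_top
    rw [← map_smul] at h
    rwa [← Submodule.Quotient.mk_eq_zero Q]

/-- Key lemma: for a faithful f.g. multiplication module, `(JM :_R M) = J`. -/
lemma aux_colon (hfaithful : (⊥ : Submodule R M).colon ⊤ = ⊥) (hfin : Module.Finite R M)
    (hmul : IsMultiplicationModule R M) (J : Ideal R) :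
    (J • (⊤ : Submodule R M)).colon ⊤ = J := by
  apply le_antisymm
  · intro a ha
    by_contra haJ
    set K := J.colon (Ideal.span {a}) with hKdef
    have hK : K ≠ ⊤ := by
      intro h
      apply haJ
      have h1 : (1 : R) ∈ K := h ▸ Submodule.mem_top
      have := Submodule.mem_colon.1 h1 a (Submodule.mem_span_singleton_self a)
      simpa using this
    obtain ⟨m, hm, hKm⟩ := Ideal.exists_le_maximal K hK
    have hmM : m • (⊤ : Submodule R M) ≠ ⊤ := fun h =>
      hm.ne_top (aux_nakayama hfaithful hfin h)
    obtain ⟨q, x, hq, hqx⟩ := aux_cyclic hfin hmul hm hmM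
    have hax : a • x ∈ J • (⊤ : Submodule R M) := Submodule.mem_colon.1 ha x trivial
    have h1 : q • (a • x) ∈ J • Submodule.span R {x} := by
      refine Submodule.smul_induction_on hax (fun c hc y _ => ?_) (fun y z hy hz => ?_)
      · rw [smul_comm]
        exact Submodule.smul_mem_smul hc (hqx y)
      · rw [smul_add]; exact Submodule.add_mem _ hy hz
    obtain ⟨c, hc, hcx⟩ := Submodule.mem_smul_span_singleton.1 h1
    have hann : ∀ y : M, ((q * a - c) * q) • y = 0 := by
      intro y
      obtain ⟨s, hs⟩ := Submodule.mem_span_singleton.1 (hqx y)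
      calc ((q * a - c) * q) • y = (q * a - c) • (q • y) := by rw [mul_smul]
        _ = (q * a - c) • (s • x) := by rw [hs]
        _ = s • ((q * a - c) • x) := smul_comm _ _ _
        _ = s • ((q * a) • x - c • x) := by rw [sub_smul]
        _ = s • (q • (a • x) - c • x) := by rw [mul_smul]
        _ = 0 := by rw [hcx, sub_self, smul_zero]
    have hb : (q * a - c) * q ∈ (⊥ : Submodule R M).colon ⊤ :=
      Submodule.mem_colon.2 fun p _ => hann p
    rw [hfaithful] at hb
    have h0 : (q * a - c) * q = 0 := hb
    have hqq : q * q ∈ K := by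
      apply Submodule.mem_colon.2
      intro p hp
      obtain ⟨t, rfl⟩ := Ideal.mem_span_singleton'.1 hp
      have heq : q * q * (t * a) = t * (c * q) := by linear_combination t * h0
      rw [smul_eq_mul, heq]
      exact J.mul_mem_left t (J.mul_mem_right q hc)
    exact hq ((hm.isPrime.mem_or_mem (hKm hqq)).elim id id)
  · intro r hr
    exact Submodule.mem_colon.2 fun p _ => Submodule.smul_mem_smul hr Submodule.mem_top

lemma aux_eq_colon_smul (hmul : IsMultiplicationModule R M) (N : Submodule R M) :
    N = (N.colon ⊤) • (⊤ : Submodule R M) := by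
  obtain ⟨J, hJ⟩ := hmul N
  apply le_antisymm
  · have hJle : J ≤ N.colon ⊤ := fun r hr =>
      Submodule.mem_colon.2 fun p hp => hJ ▸ Submodule.smul_mem_smul hr hp
    exact hJ.le.trans (Submodule.smul_mono_left hJle)
  · exact Submodule.smul_le.2 fun r hr n hn => Submodule.mem_colon.1 hr n hn

/-- `pM` is a prime submodule for `p` a prime ideal. -/
lemma aux_pM_prime (hfaithful : (⊥ : Submodule R M).colon ⊤ = ⊥) (hfin : Module.Finite R M)
    (hmul : IsMultiplicationModule R M) {p : Ideal R} (hp : p.IsPrime) :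
    (p • (⊤ : Submodule R M)).IsPrimeSubmodule := by
  constructor
  · intro h
    exact hp.ne_top (aux_nakayama hfaithful hfin h)
  · intro r x hrx
    by_cases hx : x ∈ p • (⊤ : Submodule R M)
    · exact Or.inl hx
    · right
      rw [aux_colon hfaithful hfin hmul p]
      obtain ⟨B, hB⟩ := hmul (Submodule.span R {x})
      have hBp : ¬B ≤ p := fun h =>
        hx (Submodule.smul_mono_left h (hB ▸ Submodule.mem_span_singleton_self x))
      obtain ⟨b, hb, hbp⟩ := SetLike.not_le_iff_exists.1 hBp
      have hrb : r * b ∈ p := by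
        rw [← aux_colon hfaithful hfin hmul p]
        apply Submodule.mem_colon.2
        intro y _
        have hby : b • y ∈ Submodule.span R {x} := hB ▸ Submodule.smul_mem_smul hb Submodule.mem_top
        obtain ⟨s, hs⟩ := Submodule.mem_span_singleton.1 hby
        have heq : (r * b) • y = s • (r • x) :=
          calc (r * b) • y = r • (b • y) := mul_smul r b y
            _ = r • (s • x) := by rw [hs]
            _ = s • (r • x) := smul_comm r s x
        rw [heq]
        exact Submodule.smul_mem _ s hrx
      exact (hp.mem_or_mem hrb).resolve_right hbp

/-- The colon of a prime submodule is a prime ideal. -/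
lemma aux_colon_prime {Q : Submodule R M} (hQ : Q.IsPrimeSubmodule) :
    (Q.colon ⊤).IsPrime := by
  constructor
  · intro h
    apply hQ.1
    have h1 : (1 : R) ∈ Q.colon ⊤ := h ▸ Submodule.mem_top
    refine Submodule.eq_top_iff'.2 fun y => ?_
    simpa using Submodule.mem_colon.1 h1 y trivial
  · intro r s hrs
    by_cases hs : s ∈ Q.colon ⊤
    · exact Or.inr hs
    · left
      obtain ⟨y, hy⟩ : ∃ y : M, s • y ∉ Q := by
        by_contra h
        push_neg at h
        exact hs (Submodule.mem_colon.2 fun y _ => h y)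
      have h1 : r • (s • y) ∈ Q := by
        rw [← mul_smul]
        exact Submodule.mem_colon.1 hrs y trivial
      exact (hQ.2 r (s • y) h1).resolve_left hy

/-- `pM` is a minimal prime submodule for `p` a minimal prime ideal. -/
lemma aux_pM_minimal (hfaithful : (⊥ : Submodule R M).colon ⊤ = ⊥) (hfin : Module.Finite R M)
    (hmul : IsMultiplicationModule R M) {p : Ideal R} (hp : p ∈ minimalPrimes R) :
    (p • (⊤ : Submodule R M)).IsMinimalPrime := by
  have hpp : p.IsPrime := hp.1.1
  refine ⟨aux_pM_prime hfaithful hfin hmul hpp, fun Q hQ hle => ?_⟩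
  have hq' : (Q.colon ⊤).IsPrime := aux_colon_prime hQ
  have hQeq : Q = (Q.colon ⊤) • ⊤ := aux_eq_colon_smul hmul Q
  have hq'le : Q.colon ⊤ ≤ p := by
    intro r hr
    rw [← aux_colon hfaithful hfin hmul p]
    exact Submodule.mem_colon.2 fun y hy => hle (Submodule.mem_colon.1 hr y hy)
  have : p ≤ Q.colon ⊤ := hp.2 ⟨hq', bot_le⟩ hq'le
  rw [hQeq, le_antisymm hq'le this]

end Aux

theorem stmt11 (hfaithful : (⊥ : Submodule R M).colon ⊤ = ⊥)
    (hfin : Module.Finite R M) (hmul : IsMultiplicationModule R M)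
    (I : Ideal R) (hI : IsZIdeal I) :
    IsQuasiZSubmodule (I • (⊤ : Submodule R M)) := by
  constructor
  · intro h
    exact hI.1 (aux_nakayama hfaithful hfin h)
  · intro a ha
    have haI : a ∈ I := by
      rw [← aux_colon hfaithful hfin hmul I]
      exact ha
    set N := primeRad (Ideal.span {a} • (⊤ : Submodule R M)) with hNdef
    have hN : N = (N.colon ⊤) • (⊤ : Submodule R M) := aux_eq_colon_smul hmul N
    have key : N.colon ⊤ ≤ idealPrimeRad (Ideal.span {a}) := by
      apply le_sInf
      rintro p ⟨hp, hap⟩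
      have hmem : p • (⊤ : Submodule R M) ∈
          {P : Submodule R M | P.IsMinimalPrime ∧ Ideal.span {a} • (⊤ : Submodule R M) ≤ P} :=
        ⟨aux_pM_minimal hfaithful hfin hmul hp, Submodule.smul_mono_left hap⟩
      have hle : N ≤ p • (⊤ : Submodule R M) := sInf_le hmem
      intro r hr
      rw [← aux_colon hfaithful hfin hmul p]
      exact Submodule.mem_colon.2 fun y hy => hle (Submodule.mem_colon.1 hr y hy)
    calc N = (N.colon ⊤) • (⊤ : Submodule R M) := hN
      _ ≤ idealPrimeRad (Ideal.span {a}) • (⊤ : Submodule R M) := Submodule.smul_mono_left key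
      _ ≤ I • (⊤ : Submodule R M) := Submodule.smul_mono_left (hI.2 a haI)
end

section
/- Every proper submodule of a faithful reduced multiplication R-module M that is also a comultiplication module is a quasi z°-submodule of M. -/
variable {R : Type*} [CommRing R] {M : Type*} [AddCommGroup M] [Module R M]

lemma chain_sInf_prime {c : Set (Submodule R M)} (hc : IsChain (· ≤ ·) c)
    (hne : c.Nonempty) (hprime : ∀ P ∈ c, P.IsPrimeSubmodule) :
    (sInf c).IsPrimeSubmodule := by
  obtain ⟨P0, hP0⟩ := hne
  constructor
  · intro htop
    have h1 : sInf c ≤ P0 := sInf_le hP0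
    rw [htop, top_le_iff] at h1
    exact (hprime P0 hP0).1 h1
  · intro r m hrm
    by_cases hm : m ∈ sInf c
    · exact Or.inl hm
    · right
      rw [Submodule.mem_sInf] at hm
      push_neg at hm
      obtain ⟨Pj, hPjc, hmPj⟩ := hm
      rw [Submodule.mem_colon]
      intro p _
      rw [Submodule.mem_sInf]
      intro Pi hPic
      rcases eq_or_ne Pi Pj with rfl | hne'
      · rcases (hprime Pi hPic).2 r m (Submodule.mem_sInf.1 hrm Pi hPic) with h | h
        · exact absurd h hmPj
        · exact Submodule.mem_colon.1 h p (Submodule.mem_top (R := R))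
      · rcases hc hPic hPjc hne' with hij | hji
        · have hmPi : m ∉ Pi := fun h => hmPj (hij h)
          rcases (hprime Pi hPic).2 r m (Submodule.mem_sInf.1 hrm Pi hPic) with h | h
          · exact absurd h hmPi
          · exact Submodule.mem_colon.1 h p (Submodule.mem_top (R := R))
        · rcases (hprime Pj hPjc).2 r m (Submodule.mem_sInf.1 hrm Pj hPjc) with h | h
          · exact absurd h hmPj
          · exact hji (Submodule.mem_colon.1 h p (Submodule.mem_top (R := R)))

lemma exists_minimal_prime_le (P : Submodule R M) (hP : P.IsPrimeSubmodule) :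
    ∃ Q : Submodule R M, Q.IsMinimalPrime ∧ Q ≤ P := by
  have := zorn_le_nonempty₀ (α := (Submodule R M)ᵒᵈ)
    {Q : (Submodule R M)ᵒᵈ | (OrderDual.ofDual Q).IsPrimeSubmodule ∧ OrderDual.ofDual Q ≤ P}
    ?_ (OrderDual.toDual P) ⟨hP, le_rfl⟩
  · obtain ⟨m, hPm, hm⟩ := this
    refine ⟨OrderDual.ofDual m, ⟨hm.1.1, ?_⟩, hm.1.2⟩
    intro Q hQ hQm
    exact le_antisymm hQm (hm.le_of_ge ⟨hQ, le_trans hQm hm.1.2⟩ hQm)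
  · intro c hcs hchain y hy
    refine ⟨OrderDual.toDual (sInf (OrderDual.ofDual '' c)), ⟨?_, ?_⟩, ?_⟩
    · have himg : IsChain (· ≤ ·) (OrderDual.ofDual '' c : Set (Submodule R M)) := by
        rintro _ ⟨p, hp, rfl⟩ _ ⟨q, hq, rfl⟩ hpq
        rcases hchain hp hq (fun h => hpq (congrArg OrderDual.ofDual h)) with h | h
        · exact Or.inr h
        · exact Or.inl h
      have hne2 : (OrderDual.ofDual '' c : Set (Submodule R M)).Nonempty :=
        Set.Nonempty.image _ ⟨y, hy⟩
      exact chain_sInf_prime himg hne2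
        (fun Q hQ => by obtain ⟨q, hq, rfl⟩ := hQ; exact (hcs hq).1)
    · exact le_trans (sInf_le (Set.mem_image_of_mem _ hy)) (hcs hy).2
    · intro z hz
      exact sInf_le (α := Submodule R M) (Set.mem_image_of_mem (⇑OrderDual.ofDual) hz)

lemma mem_pointAnn {J : Ideal R} {m : M} : m ∈ (pointAnn J : Submodule R M) ↔ ∀ j ∈ J, j • m = 0 :=
  Iff.rfl

theorem stmt16 (hfaithful : (⊥ : Submodule R M).colon ⊤ = ⊥)
    (hmul : IsMultiplicationModule R M) (hred : IsReducedModule R M)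
    (hcomul : ∀ N : Submodule R M, ∃ I : Ideal R, N = pointAnn I)
    (N : Submodule R M) (hN : N ≠ ⊤) :
    IsQuasiZSubmodule N := by
  refine ⟨hN, ?_⟩
  intro a ha
  set K : Submodule R M := Ideal.span {a} • (⊤ : Submodule R M) with hK
  have hKN : K ≤ N := by
    rw [hK]
    refine Submodule.smul_le.2 fun r hr n _ => ?_
    rw [Ideal.mem_span_singleton] at hr
    obtain ⟨c, rfl⟩ := hr
    rw [mul_comm, mul_smul]
    exact Submodule.smul_mem _ c (Submodule.mem_colon.1 ha n (Submodule.mem_top (R := R)))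
  obtain ⟨J, hJ⟩ := hcomul K
  intro x hx
  rw [primeRad, Submodule.mem_sInf] at hx
  have hxK : x ∈ K := by
    rw [hJ, mem_pointAnn]
    intro j hj
    -- j kills K, in particular j • (a • m) = 0 for all m
    have hjK : ∀ k ∈ K, j • k = 0 := fun k hk => (hJ ▸ hk) j hj
    -- show j • x lies in every prime submodule
    have hjx : ∀ P : Submodule R M, P.IsPrimeSubmodule → j • x ∈ P := by
      intro P hP
      obtain ⟨Q, hQ, hQP⟩ := exists_minimal_prime_le P hP
      by_cases hKQ : K ≤ Q
      · exact hQP (Submodule.smul_mem _ j (hx Q ⟨hQ, hKQ⟩))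
      · have : ∃ m : M, a • m ∉ Q := by
          by_contra h
          push_neg at h
          refine hKQ ?_
          rw [hK]
          refine Submodule.smul_le.2 fun r hr n _ => ?_
          rw [Ideal.mem_span_singleton] at hr
          obtain ⟨c, rfl⟩ := hr
          rw [mul_comm, mul_smul]
          exact Submodule.smul_mem _ c (h n)
        obtain ⟨m, hmQ⟩ := this
        have ham : a • m ∈ K := by
          rw [hK]
          exact Submodule.smul_mem_smul (Ideal.mem_span_singleton_self a) Submodule.mem_top
        have h0 : j • (a • m) = 0 := hjK _ ham
        have : j • (a • m) ∈ Q := h0 ▸ Q.zero_mem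
        rcases hQ.1.2 j (a • m) this with h | h
        · exact absurd h hmQ
        · exact hQP (Submodule.mem_colon.1 h x (Submodule.mem_top (R := R)))
    have : j • x ∈ sInf {P : Submodule R M | P.IsPrimeSubmodule} :=
      Submodule.mem_sInf.2 fun P hP => hjx P hP
    rw [hred] at this
    exact this
  exact hKN hxK
end
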